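/- On the domain D = {(x¹,x²,y¹,y²) ∈ ℝ⁴ : x¹ ≠ 0, y¹ ≠ 0}, for the web function f¹ = x¹ + y¹, f² = −x¹y² + x²y¹, the curvature tensor satisfies: b¹_{jkl} = 0 for all j,k,l; b²₂₁₁ = b²₁₂₂ = b²₂₁₂ = b²₂₂₁ = b²₂₂₂ = 0; b²₁₁₁ = (1/y¹ − 1/x¹)(x²/x¹ − y²/y¹); b²₁₂₁ = −1/(y¹)²; and b²₁₁₂ = 1/(x¹)². -/

import Mathlib

noncomputable section

/-- Points of ℝ⁴ with coordinates (x¹, x², y¹, y²). -/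
abbrev Pt : Type := ℝ × ℝ × ℝ × ℝ

/-- Partial derivative with respect to x^j (j = 0 ↦ x¹, j = 1 ↦ x²). -/
def pdx (j : Fin 2) (F : Pt → ℝ) (p : Pt) : ℝ :=
  if j = 0 then deriv (fun t => F (t, p.2.1, p.2.2.1, p.2.2.2)) p.1
  else deriv (fun t => F (p.1, t, p.2.2.1, p.2.2.2)) p.2.1

/-- Partial derivative with respect to y^k (k = 0 ↦ y¹, k = 1 ↦ y²). -/
def pdy (k : Fin 2) (F : Pt → ℝ) (p : Pt) : ℝ :=
  if k = 0 then deriv (fun t => F (p.1, p.2.1, t, p.2.2.2)) p.2.2.1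
  else deriv (fun t => F (p.1, p.2.1, p.2.2.1, t)) p.2.2.2

/-- Jacobian matrix f̄ with entries f̄^i_j = ∂f^i/∂x^j. -/
def fbar (f : Fin 2 → Pt → ℝ) (p : Pt) : Matrix (Fin 2) (Fin 2) ℝ :=
  Matrix.of fun i j => pdx j (f i) p

/-- Jacobian matrix f̃ with entries f̃^i_k = ∂f^i/∂y^k. -/
def ftil (f : Fin 2 → Pt → ℝ) (p : Pt) : Matrix (Fin 2) (Fin 2) ℝ :=
  Matrix.of fun i k => pdy k (f i) p

/-- Connection coefficients Γ^i_{jk} = −Σ_{l,m} (∂²f^i/∂x^l∂y^m) ḡ^l_j g̃^m_k,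
where ḡ = f̄⁻¹ and g̃ = f̃⁻¹. -/
def Gam (f : Fin 2 → Pt → ℝ) (i j k : Fin 2) (p : Pt) : ℝ :=
  - ∑ l : Fin 2, ∑ m : Fin 2,
      pdy m (pdx l (f i)) p * (fbar f p)⁻¹ l j * (ftil f p)⁻¹ m k

/-- Torsion tensor a^i_{jk} = (Γ^i_{jk} − Γ^i_{kj})/2. -/
def tors (f : Fin 2 → Pt → ℝ) (i j k : Fin 2) (p : Pt) : ℝ :=
  (Gam f i j k p - Gam f i k j p) / 2

/-- Curvature tensor b^i_{jkl}. -/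
def curv (f : Fin 2 → Pt → ℝ) (i j k l : Fin 2) (p : Pt) : ℝ :=
  (1/2) * ∑ m : Fin 2,
    ( pdx m (Gam f i k l) p * (fbar f p)⁻¹ m j
    + pdx m (Gam f i j l) p * (fbar f p)⁻¹ m k
    - pdy m (Gam f i k j) p * (ftil f p)⁻¹ m l
    - pdy m (Gam f i k l) p * (ftil f p)⁻¹ m j
    + Gam f m j l p * Gam f i k m p
    - Gam f m k j p * Gam f i m l p
    + 2 * Gam f m k l p * tors f i m j p )

/-- The web function: f¹ = x¹ + y¹, f² = −x¹y² + x²y¹. -/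
def w : Fin 2 → Pt → ℝ :=
  ![fun p => p.1 + p.2.2.1, fun p => -(p.1 * p.2.2.2) + p.2.1 * p.2.2.1]

/- ===== auxiliary lemmas ===== -/

private lemma dcongr {F G : ℝ → ℝ} {a : ℝ} (ha : a ≠ 0) (h : ∀ t, t ≠ 0 → F t = G t) :
    deriv F a = deriv G a :=
  Filter.EventuallyEq.deriv_eq <| (eventually_ne_nhds ha).mono h

private lemma dall {F G : ℝ → ℝ} (a : ℝ) (h : ∀ t, F t = G t) : deriv F a = deriv G a := by
  rw [funext h]

private lemma d1 {a : ℝ} (c d : ℝ) (ha : a ≠ 0) : deriv (fun t => c/t - d) a = -(c/a^2) := by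
  simpa [div_eq_mul_inv, mul_comm] using (((hasDerivAt_inv ha).const_mul c).sub_const d).deriv
private lemma d2 {a : ℝ} (c d : ℝ) (ha : a ≠ 0) : deriv (fun t => d - c/t) a = c/a^2 := by
  simpa [div_eq_mul_inv, mul_comm] using (((hasDerivAt_inv ha).const_mul c).const_sub d).deriv
private lemma d3 (a c d : ℝ) : deriv (fun t => t/c - d) a = 1/c := by
  simpa using (((hasDerivAt_id a).div_const c).sub_const d).deriv
private lemma d4 (a c d : ℝ) : deriv (fun t => d - t/c) a = -(1/c) := by
  simpa using (((hasDerivAt_id a).div_const c).const_sub d).deriv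
private lemma d5 {a : ℝ} (c : ℝ) (ha : a ≠ 0) : deriv (fun t => c/t) a = -(c/a^2) := by
  simpa [div_eq_mul_inv, mul_comm] using ((hasDerivAt_inv ha).const_mul c).deriv

/- first partials of w -/
private lemma pdx0w0 : pdx 0 (w 0) = fun _ => 1 := by
  funext q
  show deriv (fun t => w 0 (t, q.2.1, q.2.2.1, q.2.2.2)) q.1 = _
  simp [w]
private lemma pdx1w0 : pdx 1 (w 0) = fun _ => 0 := by
  funext q
  show deriv (fun _ => w 0 (q.1, q.2.1, q.2.2.1, q.2.2.2)) q.2.1 = _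
  simp [w]
private lemma pdx0w1 : pdx 0 (w 1) = fun q => -q.2.2.2 := by
  funext q
  show deriv (fun t => w 1 (t, q.2.1, q.2.2.1, q.2.2.2)) q.1 = _
  simp only [w, Matrix.cons_val_one, Matrix.head_cons]
  simpa using (((hasDerivAt_id q.1).mul_const q.2.2.2).neg.add_const (q.2.1 * q.2.2.1)).deriv
private lemma pdx1w1 : pdx 1 (w 1) = fun q => q.2.2.1 := by
  funext q
  show deriv (fun t => w 1 (q.1, t, q.2.2.1, q.2.2.2)) q.2.1 = _
  simp only [w, Matrix.cons_val_one, Matrix.head_cons]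
  simpa using ((hasDerivAt_id q.2.1).mul_const q.2.2.1).const_add (-(q.1 * q.2.2.2)) |>.deriv
private lemma pdy0w0 (q : Pt) : pdy 0 (w 0) q = 1 := by
  show deriv (fun t => w 0 (q.1, q.2.1, t, q.2.2.2)) q.2.2.1 = _
  simp only [w, Matrix.cons_val_zero]
  simpa using ((hasDerivAt_id q.2.2.1).const_add q.1).deriv
private lemma pdy1w0 (q : Pt) : pdy 1 (w 0) q = 0 := by
  show deriv (fun _ => w 0 (q.1, q.2.1, q.2.2.1, q.2.2.2)) q.2.2.2 = _
  simp [w]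
private lemma pdy0w1 (q : Pt) : pdy 0 (w 1) q = q.2.1 := by
  show deriv (fun t => w 1 (q.1, q.2.1, t, q.2.2.2)) q.2.2.1 = _
  simp only [w, Matrix.cons_val_one, Matrix.head_cons]
  simpa using ((hasDerivAt_id q.2.2.1).const_mul q.2.1).const_add (-(q.1 * q.2.2.2)) |>.deriv
private lemma pdy1w1 (q : Pt) : pdy 1 (w 1) q = -q.1 := by
  show deriv (fun t => w 1 (q.1, q.2.1, q.2.2.1, t)) q.2.2.2 = _
  simp only [w, Matrix.cons_val_one, Matrix.head_cons]
  simpa using ((hasDerivAt_id q.2.2.2).const_mul q.1).neg.add_const (q.2.1 * q.2.2.1) |>.deriv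

/- mixed second partials -/
private lemma m00 (q : Pt) : pdy 0 (pdx 0 (w 1)) q = 0 := by
  rw [pdx0w1]; show deriv (fun _ => -q.2.2.2) q.2.2.1 = 0; simp
private lemma m01 (q : Pt) : pdy 1 (pdx 0 (w 1)) q = -1 := by
  rw [pdx0w1]; show deriv (fun t => -t) q.2.2.2 = -1; simp
private lemma m10 (q : Pt) : pdy 0 (pdx 1 (w 1)) q = 1 := by
  rw [pdx1w1]; show deriv (fun t => t) q.2.2.1 = 1; simp
private lemma m11 (q : Pt) : pdy 1 (pdx 1 (w 1)) q = 0 := by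
  rw [pdx1w1]; show deriv (fun _ => q.2.2.1) q.2.2.2 = 0; simp
private lemma m0w0 (m : Fin 2) (q : Pt) : pdy m (pdx 0 (w 0)) q = 0 := by
  rw [pdx0w0]; unfold pdy; split <;> simp
private lemma m1w0 (m : Fin 2) (q : Pt) : pdy m (pdx 1 (w 0)) q = 0 := by
  rw [pdx1w0]; unfold pdy; split <;> simp

/- Jacobians and inverses -/
private lemma fbar_w (q : Pt) : fbar w q = !![1, 0; -q.2.2.2, q.2.2.1] := by
  ext i j
  fin_cases i <;> fin_cases j <;>
    simp [fbar, pdx0w0, pdx1w0, pdx0w1, pdx1w1]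
private lemma ftil_w (q : Pt) : ftil w q = !![1, 0; q.2.1, -q.1] := by
  ext i j
  fin_cases i <;> fin_cases j <;>
    simp [ftil, pdy0w0, pdy1w0, pdy0w1, pdy1w1]
private lemma fbar_inv (q : Pt) (hy : q.2.2.1 ≠ 0) :
    (fbar w q)⁻¹ = !![1, 0; q.2.2.2/q.2.2.1, 1/q.2.2.1] := by
  rw [fbar_w]
  apply Matrix.inv_eq_right_inv
  ext i j
  fin_cases i <;> fin_cases j <;>
    · simp [Matrix.mul_apply, Fin.sum_univ_two]
      try field_simp
      try ring
private lemma ftil_inv (q : Pt) (hx : q.1 ≠ 0) :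
    (ftil w q)⁻¹ = !![1, 0; q.2.1/q.1, -(1/q.1)] := by
  rw [ftil_w]
  apply Matrix.inv_eq_right_inv
  ext i j
  fin_cases i <;> fin_cases j <;>
    · simp [Matrix.mul_apply, Fin.sum_univ_two]
      try field_simp
      try ring

/- Gamma values -/
private lemma Gam0 (j k : Fin 2) (q : Pt) : Gam w 0 j k q = 0 := by
  simp [Gam, Fin.sum_univ_two, m0w0, m1w0]
private lemma G100 (x1 x2 y1 y2 : ℝ) (hx : x1 ≠ 0) (hy : y1 ≠ 0) :
    Gam w 1 0 0 (x1, x2, y1, y2) = x2/x1 - y2/y1 := by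
  simp only [Gam, Fin.sum_univ_two]
  rw [fbar_inv _ hy, ftil_inv _ hx, m00, m01, m10, m11]
  simp
  ring
private lemma G101 (x1 x2 y1 y2 : ℝ) (hx : x1 ≠ 0) (hy : y1 ≠ 0) :
    Gam w 1 0 1 (x1, x2, y1, y2) = -1/x1 := by
  simp only [Gam, Fin.sum_univ_two]
  rw [fbar_inv _ hy, ftil_inv _ hx, m00, m01, m10, m11]
  simp
  ring
private lemma G110 (x1 x2 y1 y2 : ℝ) (hx : x1 ≠ 0) (hy : y1 ≠ 0) :
    Gam w 1 1 0 (x1, x2, y1, y2) = -1/y1 := by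
  simp only [Gam, Fin.sum_univ_two]
  rw [fbar_inv _ hy, ftil_inv _ hx, m00, m01, m10, m11]
  simp
  ring
private lemma G111 (x1 x2 y1 y2 : ℝ) (hx : x1 ≠ 0) (hy : y1 ≠ 0) :
    Gam w 1 1 1 (x1, x2, y1, y2) = 0 := by
  simp only [Gam, Fin.sum_univ_two]
  rw [fbar_inv _ hy, ftil_inv _ hx, m00, m01, m10, m11]
  simp

section
variable {x1 x2 y1 y2 : ℝ}

/- derivatives of Gamma, i = 0 -/
private lemma dxG0 (m j k : Fin 2) (q : Pt) : pdx m (Gam w 0 j k) q = 0 := by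
  unfold pdx
  split <;> · rw [dall _ (fun t => Gam0 j k _)]; exact deriv_const _ _
private lemma dyG0 (m j k : Fin 2) (q : Pt) : pdy m (Gam w 0 j k) q = 0 := by
  unfold pdy
  split <;> · rw [dall _ (fun t => Gam0 j k _)]; exact deriv_const _ _

/- derivatives of Gamma^2_{00} -/
private lemma dxG100_0 (hx : x1 ≠ 0) (hy : y1 ≠ 0) :
    pdx 0 (Gam w 1 0 0) (x1, x2, y1, y2) = -(x2/x1^2) := by
  show deriv (fun t => Gam w 1 0 0 (t, x2, y1, y2)) x1 = _
  rw [dcongr hx (fun t ht => G100 t x2 y1 y2 ht hy)]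
  exact d1 x2 (y2/y1) hx
private lemma dxG100_1 (hx : x1 ≠ 0) (hy : y1 ≠ 0) :
    pdx 1 (Gam w 1 0 0) (x1, x2, y1, y2) = 1/x1 := by
  show deriv (fun t => Gam w 1 0 0 (x1, t, y1, y2)) x2 = _
  rw [dall _ (fun t => G100 x1 t y1 y2 hx hy)]
  exact d3 x2 x1 (y2/y1)
private lemma dyG100_0 (hx : x1 ≠ 0) (hy : y1 ≠ 0) :
    pdy 0 (Gam w 1 0 0) (x1, x2, y1, y2) = y2/y1^2 := by
  show deriv (fun t => Gam w 1 0 0 (x1, x2, t, y2)) y1 = _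
  rw [dcongr hy (fun t ht => G100 x1 x2 t y2 hx ht)]
  exact d2 y2 (x2/x1) hy
private lemma dyG100_1 (hx : x1 ≠ 0) (hy : y1 ≠ 0) :
    pdy 1 (Gam w 1 0 0) (x1, x2, y1, y2) = -(1/y1) := by
  show deriv (fun t => Gam w 1 0 0 (x1, x2, y1, t)) y2 = _
  rw [dall _ (fun t => G100 x1 x2 y1 t hx hy)]
  exact d4 y2 y1 (x2/x1)

/- derivatives of Gamma^2_{01} -/
private lemma dxG101_0 (hx : x1 ≠ 0) (hy : y1 ≠ 0) :
    pdx 0 (Gam w 1 0 1) (x1, x2, y1, y2) = 1/x1^2 := by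
  show deriv (fun t => Gam w 1 0 1 (t, x2, y1, y2)) x1 = _
  rw [dcongr hx (fun t ht => G101 t x2 y1 y2 ht hy), d5 (-1) hx]
  ring
private lemma dxG101_1 (hx : x1 ≠ 0) (hy : y1 ≠ 0) :
    pdx 1 (Gam w 1 0 1) (x1, x2, y1, y2) = 0 := by
  show deriv (fun t => Gam w 1 0 1 (x1, t, y1, y2)) x2 = _
  rw [dall _ (fun t => G101 x1 t y1 y2 hx hy)]
  exact deriv_const _ _
private lemma dyG101_0 (hx : x1 ≠ 0) (hy : y1 ≠ 0) :
    pdy 0 (Gam w 1 0 1) (x1, x2, y1, y2) = 0 := by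
  show deriv (fun t => Gam w 1 0 1 (x1, x2, t, y2)) y1 = _
  rw [dcongr hy (fun t ht => G101 x1 x2 t y2 hx ht)]
  exact deriv_const _ _
private lemma dyG101_1 (hx : x1 ≠ 0) (hy : y1 ≠ 0) :
    pdy 1 (Gam w 1 0 1) (x1, x2, y1, y2) = 0 := by
  show deriv (fun t => Gam w 1 0 1 (x1, x2, y1, t)) y2 = _
  rw [dall _ (fun t => G101 x1 x2 y1 t hx hy)]
  exact deriv_const _ _

/- derivatives of Gamma^2_{10} -/
private lemma dxG110_0 (hx : x1 ≠ 0) (hy : y1 ≠ 0) :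
    pdx 0 (Gam w 1 1 0) (x1, x2, y1, y2) = 0 := by
  show deriv (fun t => Gam w 1 1 0 (t, x2, y1, y2)) x1 = _
  rw [dcongr hx (fun t ht => G110 t x2 y1 y2 ht hy)]
  exact deriv_const _ _
private lemma dxG110_1 (hx : x1 ≠ 0) (hy : y1 ≠ 0) :
    pdx 1 (Gam w 1 1 0) (x1, x2, y1, y2) = 0 := by
  show deriv (fun t => Gam w 1 1 0 (x1, t, y1, y2)) x2 = _
  rw [dall _ (fun t => G110 x1 t y1 y2 hx hy)]
  exact deriv_const _ _
private lemma dyG110_0 (hx : x1 ≠ 0) (hy : y1 ≠ 0) :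
    pdy 0 (Gam w 1 1 0) (x1, x2, y1, y2) = 1/y1^2 := by
  show deriv (fun t => Gam w 1 1 0 (x1, x2, t, y2)) y1 = _
  rw [dcongr hy (fun t ht => G110 x1 x2 t y2 hx ht), d5 (-1) hy]
  ring
private lemma dyG110_1 (hx : x1 ≠ 0) (hy : y1 ≠ 0) :
    pdy 1 (Gam w 1 1 0) (x1, x2, y1, y2) = 0 := by
  show deriv (fun t => Gam w 1 1 0 (x1, x2, y1, t)) y2 = _
  rw [dall _ (fun t => G110 x1 x2 y1 t hx hy)]
  exact deriv_const _ _

/- derivatives of Gamma^2_{11} -/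
private lemma dxG111_0 (hx : x1 ≠ 0) (hy : y1 ≠ 0) :
    pdx 0 (Gam w 1 1 1) (x1, x2, y1, y2) = 0 := by
  show deriv (fun t => Gam w 1 1 1 (t, x2, y1, y2)) x1 = _
  rw [dcongr hx (fun t ht => G111 t x2 y1 y2 ht hy)]
  exact deriv_const _ _
private lemma dxG111_1 (hx : x1 ≠ 0) (hy : y1 ≠ 0) :
    pdx 1 (Gam w 1 1 1) (x1, x2, y1, y2) = 0 := by
  show deriv (fun t => Gam w 1 1 1 (x1, t, y1, y2)) x2 = _
  rw [dall _ (fun t => G111 x1 t y1 y2 hx hy)]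
  exact deriv_const _ _
private lemma dyG111_0 (hx : x1 ≠ 0) (hy : y1 ≠ 0) :
    pdy 0 (Gam w 1 1 1) (x1, x2, y1, y2) = 0 := by
  show deriv (fun t => Gam w 1 1 1 (x1, x2, t, y2)) y1 = _
  rw [dcongr hy (fun t ht => G111 x1 x2 t y2 hx ht)]
  exact deriv_const _ _
private lemma dyG111_1 (hx : x1 ≠ 0) (hy : y1 ≠ 0) :
    pdy 1 (Gam w 1 1 1) (x1, x2, y1, y2) = 0 := by
  show deriv (fun t => Gam w 1 1 1 (x1, x2, y1, t)) y2 = _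
  rw [dall _ (fun t => G111 x1 x2 y1 t hx hy)]
  exact deriv_const _ _

end


theorem stmt_6 (x1 x2 y1 y2 : ℝ) (h1 : x1 ≠ 0) (h2 : y1 ≠ 0) :
    (∀ j k l : Fin 2, curv w 0 j k l (x1, x2, y1, y2) = 0) ∧
    curv w 1 1 0 0 (x1, x2, y1, y2) = 0 ∧
    curv w 1 0 1 1 (x1, x2, y1, y2) = 0 ∧
    curv w 1 1 0 1 (x1, x2, y1, y2) = 0 ∧
    curv w 1 1 1 0 (x1, x2, y1, y2) = 0 ∧
    curv w 1 1 1 1 (x1, x2, y1, y2) = 0 ∧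
    curv w 1 0 0 0 (x1, x2, y1, y2) = (1 / y1 - 1 / x1) * (x2 / x1 - y2 / y1) ∧
    curv w 1 0 1 0 (x1, x2, y1, y2) = -(1 / y1 ^ 2) ∧
    curv w 1 0 0 1 (x1, x2, y1, y2) = 1 / x1 ^ 2 := by
  
  constructor
  · intro j k l
    fin_cases j <;> fin_cases k <;> fin_cases l <;>
    · simp only [curv, tors, Fin.sum_univ_two, Gam0, dxG0, dyG0,
        G100 x1 x2 y1 y2 h1 h2, G101 x1 x2 y1 y2 h1 h2, G110 x1 x2 y1 y2 h1 h2,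
        G111 x1 x2 y1 y2 h1 h2]
      ring
  refine ⟨?_, ?_, ?_, ?_, ?_, ?_, ?_, ?_⟩ <;>
  · simp only [curv, tors, Fin.sum_univ_two, Gam0,
      G100 x1 x2 y1 y2 h1 h2, G101 x1 x2 y1 y2 h1 h2, G110 x1 x2 y1 y2 h1 h2,
      G111 x1 x2 y1 y2 h1 h2,
      dxG100_0 h1 h2, dxG100_1 h1 h2, dyG100_0 h1 h2, dyG100_1 h1 h2,
      dxG101_0 h1 h2, dxG101_1 h1 h2, dyG101_0 h1 h2, dyG101_1 h1 h2,
      dxG110_0 h1 h2, dxG110_1 h1 h2, dyG110_0 h1 h2, dyG110_1 h1 h2,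
      dxG111_0 h1 h2, dxG111_1 h1 h2, dyG111_0 h1 h2, dyG111_1 h1 h2,
      fbar_inv (x1, x2, y1, y2) h2, ftil_inv (x1, x2, y1, y2) h1,
      Matrix.cons_val', Matrix.cons_val_zero, Matrix.cons_val_one, Matrix.head_cons,
      Matrix.head_fin_const, Matrix.empty_val', Matrix.cons_val_fin_one, Matrix.of_apply]
    field_simp
    try ring
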